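/- Let X be a compact metric space with a finite Borel measure, V ⊆ X compact, and suppose g_n : X → ℝ are continuous with inf_X g_n > 0, g_n ≥ g_{n+1} ≥ |g| for all n, and ‖g_n − |g|‖_{L^∞(V)} → 0, where g : X → ℝ is continuous. Suppose (Q_m(h))_{m≥1} is, for each continuous h ≥ 0, a sequence of positive reals that is submultiplicative in m, monotone in h (h ≤ h' implies Q_m(h) ≤ Q_m(h')), and continuous in h in the sense that for each fixed m, Q_m(g_n) → Q_m(g) as n → ∞. Let Q(h) = lim_m Q_m(h)^{1/m}. Then lim_{n→∞} Q(g_n) = Q(g). -/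

import Mathlib

open MeasureTheory Filter

lemma aux_pow (a : ℕ → ℝ) (hpos : ∀ k, 1 ≤ k → 0 < a k)
    (hsub : ∀ m n, 1 ≤ m → 1 ≤ n → a (m + n) ≤ a m * a n)
    (m : ℕ) (hm : 1 ≤ m) : ∀ j, 1 ≤ j → a (m * j) ≤ a m ^ j := by
  intro j hj
  induction j with
  | zero => omega
  | succ j ih =>
    rcases Nat.eq_or_lt_of_le hj with h | h
    · simp [← h]
    · have hj1 : 1 ≤ j := by omega
      have h1 : a (m * (j + 1)) ≤ a (m * j) * a m := by
        have := hsub (m * j) m (Nat.one_le_iff_ne_zero.2 (Nat.mul_ne_zero (by omega) (by omega))) hm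
        simpa [Nat.mul_succ] using this
      calc a (m * (j + 1)) ≤ a (m * j) * a m := h1
        _ ≤ a m ^ j * a m := by
            exact mul_le_mul_of_nonneg_right (ih hj1) (hpos m hm).le
        _ = a m ^ (j + 1) := by ring

lemma aux_lim (a : ℕ → ℝ) (hpos : ∀ k, 1 ≤ k → 0 < a k)
    (hsub : ∀ m n, 1 ≤ m → 1 ≤ n → a (m + n) ≤ a m * a n)
    (L : ℝ) (hL : Tendsto (fun k : ℕ => a k ^ ((k : ℝ)⁻¹)) atTop (nhds L))
    (m : ℕ) (hm : 1 ≤ m) : L ≤ a m ^ ((m : ℝ)⁻¹) := by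
  have hcomp : Tendsto (fun j : ℕ => a (m * j) ^ (((m * j : ℕ) : ℝ)⁻¹)) atTop (nhds L) := by
    apply hL.comp
    exact Tendsto.atTop_mul_const' (by exact_mod_cast hm) tendsto_id |>.congr (by simp [mul_comm])
  refine le_of_tendsto hcomp ?_
  filter_upwards [eventually_ge_atTop 1] with j hj
  have hmj : (1 : ℕ) ≤ m * j := Nat.one_le_iff_ne_zero.2 (by positivity)
  have h1 : a (m * j) ≤ a m ^ j := aux_pow a hpos hsub m hm j hj
  have h2 : a (m * j) ^ (((m * j : ℕ) : ℝ)⁻¹) ≤ (a m ^ j) ^ (((m * j : ℕ) : ℝ)⁻¹) :=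
    Real.rpow_le_rpow (hpos _ hmj).le h1 (by positivity)
  refine h2.trans_eq ?_
  rw [← Real.rpow_natCast (a m) j, ← Real.rpow_mul (hpos m hm).le]
  congr 1
  have hm0 : (m : ℝ) ≠ 0 := by exact_mod_cast Nat.one_le_iff_ne_zero.1 hm
  have hj0 : (j : ℝ) ≠ 0 := by exact_mod_cast Nat.one_le_iff_ne_zero.1 hj
  push_cast
  field_simp

/-- abstract form of Lemma 3.3: given `g_n ↓ |g|` uniformly on `V` with
`inf g_n > 0`, and a family `Q_m(h)` of positive reals, submultiplicative in `m`, monotone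
and continuous in `h`, the limits `Q(h) = lim_m Q_m(h)^{1/m}` satisfy
`lim_n Q(g_n) = Q(g)`. -/
theorem stmt10 {X : Type*} [MetricSpace X] [CompactSpace X]
    [MeasurableSpace X] [BorelSpace X]
    (ν : Measure X) [IsFiniteMeasure ν]
    (V : Set X) (hV : IsCompact V)
    (g : X → ℝ) (hg : Continuous g)
    (gn : ℕ → X → ℝ) (hgnc : ∀ n, Continuous (gn n))
    (hgnpos : ∀ n, ∃ c > 0, ∀ x, c ≤ gn n x)
    (hmonon : ∀ n x, gn (n + 1) x ≤ gn n x)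
    (hge : ∀ n x, |g x| ≤ gn n x)
    (hconv : ∀ ε > 0, ∃ N, ∀ n ≥ N, ∀ x ∈ V, abs (gn n x - |g x|) ≤ ε)
    (Q : ℕ → (X → ℝ) → ℝ)
    (hQpos : ∀ m, 1 ≤ m → ∀ h : X → ℝ, Continuous h → (∀ x, 0 ≤ h x) → 0 < Q m h)
    (hQsub : ∀ m n, 1 ≤ m → 1 ≤ n → ∀ h : X → ℝ, Q (m + n) h ≤ Q m h * Q n h)
    (hQmono : ∀ m, ∀ h h' : X → ℝ, (∀ x, h x ≤ h' x) → Q m h ≤ Q m h')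
    (hQcont : ∀ m, 1 ≤ m →
      Filter.Tendsto (fun n => Q m (gn n)) Filter.atTop (nhds (Q m (fun x => |g x|))))
    (Qg : ℝ) (Qgn : ℕ → ℝ)
    (hQg : Filter.Tendsto (fun m : ℕ => Q m (fun x => |g x|) ^ ((m : ℝ)⁻¹))
      Filter.atTop (nhds Qg))
    (hQgn : ∀ n, Filter.Tendsto (fun m : ℕ => Q m (gn n) ^ ((m : ℝ)⁻¹))
      Filter.atTop (nhds (Qgn n))) :
    Filter.Tendsto Qgn Filter.atTop (nhds Qg) := by
  have hQgpos : ∀ m, 1 ≤ m → 0 < Q m (fun x => |g x|) :=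
    fun m hm => hQpos m hm _ hg.abs (fun x => abs_nonneg _)
  have hQgnpos : ∀ n m, 1 ≤ m → 0 < Q m (gn n) :=
    fun n m hm => hQpos m hm _ (hgnc n) (fun x => (abs_nonneg _).trans (hge n x))
  -- lower bound: Qg ≤ Qgn n
  have hlow : ∀ n, Qg ≤ Qgn n := by
    intro n
    refine le_of_tendsto_of_tendsto' hQg (hQgn n) (fun m => ?_)
    rcases Nat.eq_zero_or_pos m with rfl | hm
    · simp
    · exact Real.rpow_le_rpow (hQgpos m hm).le (hQmono m _ _ (hge n)) (by positivity)
  -- key: Qgn n ≤ Q m (gn n) ^ (1/m)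
  have hkey : ∀ n m, 1 ≤ m → Qgn n ≤ Q m (gn n) ^ ((m : ℝ)⁻¹) := by
    intro n m hm
    exact aux_lim (fun k => Q k (gn n)) (fun k hk => hQgnpos n k hk)
      (fun a b ha hb => hQsub a b ha hb (gn n)) (Qgn n) (hQgn n) m hm
  refine tendsto_order.2 ⟨fun b hb => Eventually.of_forall (fun n => hb.trans_le (hlow n)), ?_⟩
  intro b hb
  -- pick m with Q m (|g|) ^ (1/m) < b
  have : ∀ᶠ m : ℕ in atTop, Q m (fun x => |g x|) ^ ((m : ℝ)⁻¹) < b :=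
    hQg.eventually (Filter.Tendsto.eventually_lt_const hb tendsto_id) |>.mono (by simp)
  obtain ⟨m, hmb, hm1⟩ := (this.and (eventually_ge_atTop 1)).exists
  -- continuity in n
  have hc : Tendsto (fun n => Q m (gn n) ^ ((m : ℝ)⁻¹)) atTop
      (nhds (Q m (fun x => |g x|) ^ ((m : ℝ)⁻¹))) :=
    (hQcont m hm1).rpow_const (Or.inr (by positivity))
  filter_upwards [hc.eventually (Filter.Tendsto.eventually_lt_const hmb tendsto_id)] with n hn
  exact lt_of_le_of_lt (hkey n m hm1) hn
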